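/- Let f₁, f₂ : E → ℝ be globally Lipschitz concave functions with Legendre–Fenchel transforms g₁ = f₁^∨ and g₂ = f₂^∨, and let ε > 0 and c ∈ ℝ. Then |f₁(x) − f₂(x)| ≤ ε(c + ‖x‖) for all x ∈ E if and only if for all y ∈ E both g₂(y) ≤ sup_{‖z‖ ≤ ε} g₁(y − z) + εc and g₁(y) ≤ sup_{‖z‖ ≤ ε} g₂(y − z) + εc hold (suprema and inequalities taken in ℝ ∪ {−∞}). -/

import Mathlib

open Set

set_option maxHeartbeats 1000000

noncomputable section

/-- `f` is globally Lipschitz. -/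
def GloballyLipschitz (d : ℕ) (f : EuclideanSpace ℝ (Fin d) → ℝ) : Prop :=
  ∃ C : ℝ, 0 ≤ C ∧ ∀ x y, |f x - f y| ≤ C * ‖x - y‖

/-- The (concave) Legendre–Fenchel transform `f^∨(y) = inf_x (⟪y,x⟫ − f x)`, valued in
`ℝ ∪ {−∞} ⊆ EReal`. -/
noncomputable def LFdual (d : ℕ) (f : EuclideanSpace ℝ (Fin d) → ℝ)
    (y : EuclideanSpace ℝ (Fin d)) : EReal :=
  ⨅ x : EuclideanSpace ℝ (Fin d), (((inner ℝ y x : ℝ) - f x : ℝ) : EReal)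

namespace Stmt13Aux

variable {d : ℕ}

local notation "Eu" => EuclideanSpace ℝ (Fin d)

/-- decomposition of a continuous linear functional on `Eu × ℝ`. -/
lemma decompL (L : (Eu × ℝ) →L[ℝ] ℝ) (x : Eu) (t : ℝ) :
    L (x, t) = L (x, 0) + t * L (0, 1) := by
  have h : (x, t) = (x, (0 : ℝ)) + t • ((0 : Eu), (1 : ℝ)) := by
    ext <;> simp
  rw [h, map_add, map_smul, smul_eq_mul]

/-- continuity from global Lipschitz bound. -/
lemma continuous_of_GL (f : Eu → ℝ) (hL : GloballyLipschitz d f) : Continuous f := by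
  obtain ⟨C, hC0, hC⟩ := hL
  refine (LipschitzWith.of_dist_le_mul (K := C.toNNReal) fun x y => ?_).continuous
  rw [Real.dist_eq, Real.coe_toNNReal C hC0, dist_eq_norm]
  exact hC x y

/-- Key separation lemma: a convex function strictly above `-ε‖·‖` admits a linear
minorant `⟪z,·⟫` with `‖z‖ ≤ ε`. -/
lemma sep {ε : ℝ} (hε : 0 < ε) (h : Eu → ℝ)
    (hconv : ConvexOn ℝ Set.univ h) (hlb : ∀ x, -(ε * ‖x‖) < h x) :
    ∃ z : Eu, ‖z‖ ≤ ε ∧ ∀ x, (inner ℝ z x : ℝ) ≤ h x := by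
  set C : Set (Eu × ℝ) := {p | p.2 + ε * ‖p.1‖ < 0} with hCdef
  set D : Set (Eu × ℝ) := {p | h p.1 ≤ p.2} with hDdef
  have hCopen : IsOpen C := by
    apply isOpen_lt _ continuous_const
    exact continuous_snd.add (continuous_const.mul continuous_fst.norm)
  have hCconv : Convex ℝ C := by
    intro p hp q hq a b ha hb hab
    simp only [hCdef, mem_setOf_eq] at hp hq ⊢
    have h1 : (a • p + b • q).1 = a • p.1 + b • q.1 := rfl
    have h2 : (a • p + b • q).2 = a * p.2 + b * q.2 := rfl
    rw [h1, h2]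
    have hn : ‖a • p.1 + b • q.1‖ ≤ a * ‖p.1‖ + b * ‖q.1‖ := by
      calc ‖a • p.1 + b • q.1‖ ≤ ‖a • p.1‖ + ‖b • q.1‖ := norm_add_le _ _
        _ = a * ‖p.1‖ + b * ‖q.1‖ := by
            rw [norm_smul, norm_smul, Real.norm_eq_abs, Real.norm_eq_abs,
              abs_of_nonneg ha, abs_of_nonneg hb]
    rcases eq_or_lt_of_le ha with ha0 | ha0
    · have hb1 : b = 1 := by linarith
      have hx : a • p.1 + b • q.1 = q.1 := by rw [← ha0, hb1]; simp
      rw [hx, ← ha0, hb1]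
      simpa using hq
    · have k1 : a * (p.2 + ε * ‖p.1‖) < 0 := mul_neg_of_pos_of_neg ha0 hp
      have k2 : b * (q.2 + ε * ‖q.1‖) ≤ 0 := mul_nonpos_of_nonneg_of_nonpos hb hq.le
      nlinarith [mul_le_mul_of_nonneg_left hn hε.le]
  have hDconv : Convex ℝ D := by
    have := hconv.convex_epigraph
    simpa [hDdef] using this
  have hdisj : Disjoint C D := by
    rw [Set.disjoint_left]
    rintro p hp hpD
    simp only [hCdef, mem_setOf_eq] at hp
    simp only [hDdef, mem_setOf_eq] at hpD
    have := hlb p.1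
    linarith
  obtain ⟨L, u, hC, hD⟩ := geometric_hahn_banach_open hCconv hCopen hDconv hdisj
  set σ : ℝ := L (0, 1) with hσdef
  set ℓ : Eu → ℝ := fun x => L (x, 0) with hℓdef
  have hC' : ∀ x t, t + ε * ‖x‖ < 0 → ℓ x + t * σ < u := by
    intro x t ht
    have := hC (x, t) ht
    rwa [decompL L x t] at this
  have hD' : ∀ x t, h x ≤ t → u ≤ ℓ x + t * σ := by
    intro x t ht
    have := hD (x, t) ht
    rwa [decompL L x t] at this
  have hℓ0 : ℓ 0 = 0 := by
    have : ((0 : Eu), (0 : ℝ)) = (0 : Eu × ℝ) := rfl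
    simp only [hℓdef, this, map_zero]
  have hσ0 : 0 ≤ σ := by
    by_contra hneg
    push_neg at hneg
    have ht : (|u| + 1) / σ + ε * ‖(0 : Eu)‖ < 0 := by
      simp only [norm_zero, mul_zero, add_zero]
      exact div_neg_of_pos_of_neg (by positivity) hneg
    have := hC' 0 ((|u| + 1) / σ) ht
    rw [hℓ0, div_mul_cancel₀ _ hneg.ne] at this
    have := le_abs_self u
    linarith
  have hσne : σ ≠ 0 := by
    intro h0
    have h1 := hC' 0 (-1) (by rw [norm_zero]; linarith)
    have h2 := hD' 0 (h 0) le_rfl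
    rw [hℓ0, h0] at h1 h2
    simp only [zero_add, mul_zero, add_zero, neg_mul, one_mul, neg_zero] at h1 h2
    linarith
  have hσ : 0 < σ := lt_of_le_of_ne hσ0 (Ne.symm hσne)
  have hu0 : 0 ≤ u := by
    by_contra hu
    push_neg at hu
    have ht : u / (2 * σ) + ε * ‖(0 : Eu)‖ < 0 := by
      simp only [norm_zero, mul_zero, add_zero]
      exact div_neg_of_neg_of_pos hu (by linarith)
    have h1 := hC' 0 (u / (2 * σ)) ht
    have h2 : u / (2 * σ) * σ = u / 2 := by field_simp
    rw [hℓ0, zero_add, h2] at h1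
    linarith
  -- define z
  set Lx : Eu →L[ℝ] ℝ := L.comp (ContinuousLinearMap.inl ℝ Eu ℝ) with hLxdef
  set z : Eu := (InnerProductSpace.toDual ℝ Eu).symm ((-σ⁻¹) • Lx) with hzdef
  have hz : ∀ x, (inner ℝ z x : ℝ) = -(ℓ x) / σ := by
    intro x
    rw [hzdef, InnerProductSpace.toDual_symm_apply]
    simp only [ContinuousLinearMap.smul_apply, hLxdef, ContinuousLinearMap.comp_apply,
      ContinuousLinearMap.inl_apply, smul_eq_mul]
    rw [hℓdef]
    field_simp
  have key : ∀ x, ℓ x - ε * ‖x‖ * σ ≤ u := by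
    intro x
    by_contra hcon
    push_neg at hcon
    set δ := (ℓ x - ε * ‖x‖ * σ - u) / (2 * σ) with hδdef
    have hδ : 0 < δ := div_pos (by linarith) (by linarith)
    have ht : (-(ε * ‖x‖) - δ) + ε * ‖x‖ < 0 := by linarith
    have hC2 := hC' x (-(ε * ‖x‖) - δ) ht
    have hexp : δ * σ = (ℓ x - ε * ‖x‖ * σ - u) / 2 := by
      rw [hδdef]; field_simp
    nlinarith [hC2]
  -- norm bound
  have hmain : ∀ s : ℝ, 0 ≤ s → s * (‖z‖ * (‖z‖ - ε)) * σ ≤ u := by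
    intro s hs
    have hnorm : ‖(-s) • z‖ = s * ‖z‖ := by
      rw [norm_smul, Real.norm_eq_abs, abs_neg, abs_of_nonneg hs]
    have hinner : (inner ℝ z ((-s) • z) : ℝ) = -s * (‖z‖ * ‖z‖) := by
      rw [real_inner_smul_right, real_inner_self_eq_norm_mul_norm]
    have hℓx : ℓ ((-s) • z) = s * (‖z‖ * ‖z‖) * σ := by
      have h0 := hz ((-s) • z)
      rw [hinner, eq_div_iff hσ.ne'] at h0
      linear_combination h0
    have hk := key ((-s) • z)
    rw [hℓx, hnorm] at hk
    nlinarith [hk]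
  have hzε : ‖z‖ ≤ ε := by
    by_contra hzc
    push_neg at hzc
    have hpos : 0 < ‖z‖ * (‖z‖ - ε) := mul_pos (hε.trans hzc) (by linarith)
    set s : ℝ := (|u| + 1) / (‖z‖ * (‖z‖ - ε) * σ) with hsdef
    have hden : 0 < ‖z‖ * (‖z‖ - ε) * σ := mul_pos hpos hσ
    have hs : 0 ≤ s := le_of_lt (div_pos (by positivity) hden)
    have := hmain s hs
    have hval : s * (‖z‖ * (‖z‖ - ε)) * σ = |u| + 1 := by
      rw [hsdef, mul_assoc, div_mul_cancel₀ _ hden.ne']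
    rw [hval] at this
    have := le_abs_self u
    linarith
  refine ⟨z, hzε, fun x => ?_⟩
  rw [hz x, div_le_iff₀ hσ]
  have := hD' x (h x) le_rfl
  linarith

/-- Existence of a supergradient for a continuous concave function. -/
lemma supergrad (f : Eu → ℝ) (hconc : ConcaveOn ℝ Set.univ f) (hcont : Continuous f)
    (x₀ : Eu) : ∃ y : Eu, ∀ x, f x ≤ f x₀ + (inner ℝ y (x - x₀) : ℝ) := by
  set C : Set (Eu × ℝ) := {p | p.2 < f p.1} with hCdef
  have hCopen : IsOpen C := isOpen_lt continuous_snd (hcont.comp continuous_fst)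
  have hCconv : Convex ℝ C := by
    intro p hp q hq a b ha hb hab
    simp only [hCdef, mem_setOf_eq] at hp hq ⊢
    have h1 : (a • p + b • q).1 = a • p.1 + b • q.1 := rfl
    have h2 : (a • p + b • q).2 = a * p.2 + b * q.2 := rfl
    rw [h1, h2]
    have hcc := hconc.2 (mem_univ p.1) (mem_univ q.1) ha hb hab
    simp only [smul_eq_mul] at hcc
    rcases eq_or_lt_of_le ha with ha0 | ha0
    · have hb1 : b = 1 := by linarith
      have hx : a • p.1 + b • q.1 = q.1 := by rw [← ha0, hb1]; simp
      rw [hx, ← ha0, hb1]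
      simpa using hq
    · have k1 : a * p.2 < a * f p.1 := mul_lt_mul_of_pos_left hp ha0
      have k2 : b * q.2 ≤ b * f q.1 := mul_le_mul_of_nonneg_left hq.le hb
      linarith
  have hx₀ : (x₀, f x₀) ∉ C := by simp [hCdef]
  obtain ⟨L, hL⟩ := geometric_hahn_banach_open_point hCconv hCopen hx₀
  set σ : ℝ := L (0, 1) with hσdef
  set ℓ : Eu → ℝ := fun x => L (x, 0) with hℓdef
  have hC' : ∀ x t, t < f x → ℓ x + t * σ < ℓ x₀ + f x₀ * σ := by
    intro x t ht
    have := hL (x, t) ht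
    rwa [decompL L x t, decompL L x₀ (f x₀)] at this
  have hσ : 0 < σ := by
    have := hC' x₀ (f x₀ - 1) (by linarith)
    nlinarith [this]
  have key : ∀ x, ℓ x + f x * σ ≤ ℓ x₀ + f x₀ * σ := by
    intro x
    by_contra hcon
    push_neg at hcon
    set δ := (ℓ x + f x * σ - (ℓ x₀ + f x₀ * σ)) / (2 * σ) with hδdef
    have hδ : 0 < δ := div_pos (by linarith) (by linarith)
    have := hC' x (f x - δ) (by linarith)
    have hexp : δ * σ = (ℓ x + f x * σ - (ℓ x₀ + f x₀ * σ)) / 2 := by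
      rw [hδdef]; field_simp
    nlinarith [this]
  set Lx : Eu →L[ℝ] ℝ := L.comp (ContinuousLinearMap.inl ℝ Eu ℝ) with hLxdef
  set y : Eu := (InnerProductSpace.toDual ℝ Eu).symm ((-σ⁻¹) • Lx) with hydef
  have hy : ∀ x, (inner ℝ y x : ℝ) = -(ℓ x) / σ := by
    intro x
    rw [hydef, InnerProductSpace.toDual_symm_apply]
    simp only [ContinuousLinearMap.smul_apply, hLxdef, ContinuousLinearMap.comp_apply,
      ContinuousLinearMap.inl_apply, smul_eq_mul]
    rw [hℓdef]
    field_simp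
  refine ⟨y, fun x => ?_⟩
  have hsub : (inner ℝ y (x - x₀) : ℝ) = inner ℝ y x - inner ℝ y x₀ := inner_sub_right y x x₀
  rw [hsub, hy x, hy x₀]
  have hdd : -ℓ x / σ - -ℓ x₀ / σ = (ℓ x₀ - ℓ x) / σ := by field_simp; ring
  rw [hdd, ← sub_le_iff_le_add', le_div_iff₀ hσ]
  nlinarith [key x]

/-- value of the dual at a supergradient. -/
lemma LFdual_eq_at (f : Eu → ℝ) (x₀ y : Eu)
    (hy : ∀ x, f x ≤ f x₀ + (inner ℝ y (x - x₀) : ℝ)) :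
    LFdual d f y = (((inner ℝ y x₀ : ℝ) - f x₀ : ℝ) : EReal) := by
  refine le_antisymm (iInf_le _ x₀) (le_iInf fun x => ?_)
  rw [EReal.coe_le_coe_iff]
  have h1 := hy x
  have hsub : (inner ℝ y (x - x₀) : ℝ) = inner ℝ y x - inner ℝ y x₀ := inner_sub_right y x x₀
  rw [hsub] at h1
  linarith

/-- one-sided forward implication. -/
lemma oneA (f₁ f₂ : Eu → ℝ) (h₁ : ConcaveOn ℝ Set.univ f₁) {ε : ℝ} (c : ℝ) (hε : 0 < ε)
    (hf : ∀ x, f₁ x - f₂ x ≤ ε * (c + ‖x‖)) (y : Eu) :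
    LFdual d f₂ y ≤
      (⨆ z ∈ Metric.closedBall (0 : Eu) ε, LFdual d f₁ (y - z)) + ((ε * c : ℝ) : EReal) := by
  by_contra hcon
  push_neg at hcon
  obtain ⟨r, hr1, hr2⟩ := EReal.exists_between_coe_real hcon
  have hrx : ∀ x, r < (inner ℝ y x : ℝ) - f₂ x := by
    intro x
    have h0 : ((r : ℝ) : EReal) < ((((inner ℝ y x : ℝ) - f₂ x : ℝ)) : EReal) :=
      lt_of_lt_of_le hr2 (iInf_le _ x)
    exact_mod_cast h0
  have hconv : ConvexOn ℝ Set.univ (fun x : Eu => (inner ℝ y x : ℝ) - f₁ x - (r - ε * c)) := by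
    refine ⟨convex_univ, fun x _ x' _ a b ha hb hab => ?_⟩
    have hcc := h₁.2 (mem_univ x) (mem_univ x') ha hb hab
    simp only [smul_eq_mul] at hcc ⊢
    have hi : (inner ℝ y (a • x + b • x') : ℝ) = a * (inner ℝ y x : ℝ) + b * (inner ℝ y x' : ℝ) := by
      rw [inner_add_right, real_inner_smul_right, real_inner_smul_right]
    rw [hi]
    have hr' : a * (r - ε * c) + b * (r - ε * c) = r - ε * c := by
      rw [← add_mul, hab, one_mul]
    nlinarith [hcc, hr']
  have hlb : ∀ x, -(ε * ‖x‖) < (inner ℝ y x : ℝ) - f₁ x - (r - ε * c) := by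
    intro x
    have h1 := hrx x
    have h2 := hf x
    linarith
  obtain ⟨z, hz1, hz2⟩ := sep hε _ hconv hlb
  have hzB : z ∈ Metric.closedBall (0 : Eu) ε := by
    rwa [Metric.mem_closedBall, dist_zero_right]
  have hinf : ((r - ε * c : ℝ) : EReal) ≤ LFdual d f₁ (y - z) := by
    refine le_iInf fun x => ?_
    rw [EReal.coe_le_coe_iff]
    have h1 := hz2 x
    have h2 : (inner ℝ (y - z) x : ℝ) = (inner ℝ y x : ℝ) - (inner ℝ z x : ℝ) := inner_sub_left y z x
    rw [h2]
    linarith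
  have hS : ((r - ε * c : ℝ) : EReal) ≤
      ⨆ z ∈ Metric.closedBall (0 : Eu) ε, LFdual d f₁ (y - z) :=
    hinf.trans (le_biSup (fun z => LFdual d f₁ (y - z)) hzB)
  have hfin : ((r : ℝ) : EReal) ≤
      (⨆ z ∈ Metric.closedBall (0 : Eu) ε, LFdual d f₁ (y - z)) + ((ε * c : ℝ) : EReal) := by
    calc ((r : ℝ) : EReal) = ((r - ε * c : ℝ) : EReal) + ((ε * c : ℝ) : EReal) := by
          rw [← EReal.coe_add]; norm_num
      _ ≤ _ := add_le_add_left hS _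
  exact absurd (hfin.trans_lt hr1) (lt_irrefl _)

/-- one-sided reverse implication. -/
lemma oneB (f₁ f₂ : Eu → ℝ) (h₂ : ConcaveOn ℝ Set.univ f₂) (h₂c : Continuous f₂)
    {ε : ℝ} (c : ℝ) (hε : 0 < ε)
    (hg : ∀ y : Eu, LFdual d f₂ y ≤
      (⨆ z ∈ Metric.closedBall (0 : Eu) ε, LFdual d f₁ (y - z)) + ((ε * c : ℝ) : EReal))
    (x : Eu) : f₁ x - f₂ x ≤ ε * (c + ‖x‖) := by
  obtain ⟨y, hy⟩ := supergrad f₂ h₂ h₂c x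
  have hval : LFdual d f₂ y = (((inner ℝ y x : ℝ) - f₂ x : ℝ) : EReal) := LFdual_eq_at f₂ x y hy
  have hSb : (⨆ z ∈ Metric.closedBall (0 : Eu) ε, LFdual d f₁ (y - z)) ≤
      (((inner ℝ y x : ℝ) - f₁ x + ε * ‖x‖ : ℝ) : EReal) := by
    refine iSup₂_le fun z hz => ?_
    have hz' : ‖z‖ ≤ ε := by rwa [Metric.mem_closedBall, dist_zero_right] at hz
    refine le_trans (iInf_le _ x) ?_
    rw [EReal.coe_le_coe_iff]
    have h1 : (inner ℝ (y - z) x : ℝ) = (inner ℝ y x : ℝ) - (inner ℝ z x : ℝ) := inner_sub_left y z x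
    have h2 : |(inner ℝ z x : ℝ)| ≤ ε * ‖x‖ :=
      le_trans (abs_real_inner_le_norm z x)
        (mul_le_mul_of_nonneg_right hz' (norm_nonneg x))
    have h3 := (abs_le.1 h2).1
    rw [h1]
    linarith
  have hfin := (hg y).trans (add_le_add_left hSb _)
  rw [hval, ← EReal.coe_add, EReal.coe_le_coe_iff] at hfin
  linarith

end Stmt13Aux

theorem stmt_13 (d : ℕ) (hd : 1 ≤ d)
    (f₁ f₂ : EuclideanSpace ℝ (Fin d) → ℝ)
    (h₁ : ConcaveOn ℝ Set.univ f₁) (h₁L : GloballyLipschitz d f₁)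
    (h₂ : ConcaveOn ℝ Set.univ f₂) (h₂L : GloballyLipschitz d f₂)
    (ε c : ℝ) (hε : 0 < ε) :
    (∀ x, |f₁ x - f₂ x| ≤ ε * (c + ‖x‖)) ↔
      (∀ y : EuclideanSpace ℝ (Fin d),
        LFdual d f₂ y ≤
          (⨆ z ∈ Metric.closedBall (0 : EuclideanSpace ℝ (Fin d)) ε,
            LFdual d f₁ (y - z)) + ((ε * c : ℝ) : EReal) ∧
        LFdual d f₁ y ≤
          (⨆ z ∈ Metric.closedBall (0 : EuclideanSpace ℝ (Fin d)) ε,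
            LFdual d f₂ (y - z)) + ((ε * c : ℝ) : EReal)) := by
  constructor
  · intro hf y
    constructor
    · exact Stmt13Aux.oneA f₁ f₂ h₁ c hε (fun x => (abs_le.1 (hf x)).2) y
    · refine Stmt13Aux.oneA f₂ f₁ h₂ c hε (fun x => ?_) y
      have := (abs_le.1 (hf x)).1
      linarith
  · intro hg x
    have hA := Stmt13Aux.oneB f₁ f₂ h₂ (Stmt13Aux.continuous_of_GL f₂ h₂L) c hε
      (fun y => (hg y).1) x
    have hB := Stmt13Aux.oneB f₂ f₁ h₁ (Stmt13Aux.continuous_of_GL f₁ h₁L) c hε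
      (fun y => (hg y).2) x
    rw [abs_le]
    constructor <;> linarith
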